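/- Let R be a commutative ring, s ∈ R, M an R-module with R[s⁻¹] ⊗_R M = 0 (M is s-torsion), and C any R-module. Then Hom_R(M, C) is an s-contramodule: Hom_R(R[s⁻¹], Hom_R(M,C)) = 0 = Ext¹_R(R[s⁻¹], Hom_R(M,C)). -/

import Mathlib

open CategoryTheory Opposite

namespace ContramoduleAux

variable (R : Type) [CommRing R] (s : R)

/-- `1/s^n` in the localization. -/
noncomputable def mk1 (n : ℕ) : Localization.Away s :=
  Localization.mk 1 ⟨s ^ n, n, rfl⟩

/-- The telescope map `e_n ↦ e_n - s e_{n+1}`. -/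
noncomputable def dmap : (ℕ →₀ R) →ₗ[R] (ℕ →₀ R) :=
  LinearMap.id - s • Finsupp.lmapDomain R R Nat.succ

lemma dmap_single (n : ℕ) (r : R) :
    dmap R s (Finsupp.single n r) = Finsupp.single n r - Finsupp.single (n + 1) (s * r) := by
  simp [dmap, Finsupp.mapDomain_single, Finsupp.smul_single, Nat.succ_eq_add_one,
    smul_eq_mul]

/-- The augmentation `e_n ↦ 1/s^n`. -/
noncomputable def pmap : (ℕ →₀ R) →ₗ[R] Localization.Away s :=
  Finsupp.lsum R fun n => LinearMap.toSpanSingleton R _ (mk1 R s n)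

lemma pmap_single (n : ℕ) (r : R) :
    pmap R s (Finsupp.single n r) = Localization.mk r (⟨s ^ n, ⟨n, rfl⟩⟩ : Submonoid.powers s) := by
  simp only [pmap, Finsupp.lsum_single, LinearMap.toSpanSingleton_apply, mk1,
    Localization.smul_mk, smul_eq_mul, mul_one]

lemma mk_eq {a b : R} {u v : Submonoid.powers s} (h : (v : R) * a = (u : R) * b) :
    Localization.mk a u = Localization.mk b v :=
  Localization.mk_eq_mk_iff.mpr (Localization.r_of_eq h)

lemma pmap_comp_dmap : (pmap R s).comp (dmap R s) = 0 := by
  refine Finsupp.lhom_ext' fun n => LinearMap.ext_ring ?_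
  simp only [LinearMap.comp_apply, LinearMap.zero_comp, LinearMap.zero_apply,
    Finsupp.lsingle_apply, dmap_single, map_sub, pmap_single, mul_one]
  rw [sub_eq_zero]
  exact mk_eq R s (show s ^ (n+1) * 1 = s ^ n * s by rw [pow_succ]; ring)

lemma pmap_surjective : Function.Surjective (pmap R s) := by
  intro x
  induction x using Localization.induction_on with
  | H y =>
    obtain ⟨r, u⟩ := y
    obtain ⟨n, hn⟩ := u.prop
    exact ⟨Finsupp.single n r, by rw [pmap_single]; exact congrArg _ (Subtype.ext hn)⟩

lemma dmap_injective : Function.Injective (dmap R s) := by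
  rw [injective_iff_map_eq_zero]
  intro f hf
  have key : f = s • Finsupp.mapDomain Nat.succ f := by
    have := sub_eq_zero.mp hf
    simpa [dmap, sub_eq_zero] using hf
  have h0 : f 0 = 0 := by
    rw [key]
    simp [Finsupp.mapDomain_notin_range, (by simp [Nat.succ_ne_zero] : (0:ℕ) ∉ Set.range Nat.succ)]
  have hs : ∀ n, f (n + 1) = s * f n := by
    intro n
    conv_lhs => rw [key]
    simp [Finsupp.mapDomain_apply Nat.succ_injective, Nat.succ_eq_add_one]
  have hall : ∀ n, f n = 0 := by
    intro n
    induction n with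
    | zero => exact h0
    | succ n ih => rw [hs, ih, mul_zero]
  ext n
  simp [hall]

lemma single_sub_mem_range (n k : ℕ) (c : R) :
    Finsupp.single n c - Finsupp.single (n + k) (s ^ k * c) ∈ LinearMap.range (dmap R s) := by
  induction k with
  | zero => simpa using Submodule.zero_mem _
  | succ k ih =>
    have h2 := Submodule.add_mem _ ih
      (LinearMap.mem_range_self (dmap R s) (Finsupp.single (n + k) (s ^ k * c)))
    rw [dmap_single] at h2
    have : Finsupp.single n c - Finsupp.single (n + (k + 1)) (s ^ (k + 1) * c) =
        Finsupp.single n c - Finsupp.single (n + k) (s ^ k * c) +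
          (Finsupp.single (n + k) (s ^ k * c) -
            Finsupp.single (n + k + 1) (s * (s ^ k * c))) := by
      rw [pow_succ', mul_assoc]
      abel
    rw [this]
    exact h2

lemma exists_single_sub_mem (f : ℕ →₀ R) :
    ∃ (N : ℕ) (c : R), f - Finsupp.single N c ∈ LinearMap.range (dmap R s) := by
  induction f using Finsupp.induction with
  | zero => exact ⟨0, 0, by simpa using Submodule.zero_mem _⟩
  | single_add a b f _ _ ih =>
    obtain ⟨N, c, hf⟩ := ih
    refine ⟨max a N, s ^ (max a N - a) * b + s ^ (max a N - N) * c, ?_⟩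
    have h1 := single_sub_mem_range R s a (max a N - a) b
    have h2 := single_sub_mem_range R s N (max a N - N) c
    rw [Nat.add_sub_cancel' (le_max_left a N)] at h1
    rw [Nat.add_sub_cancel' (le_max_right a N)] at h2
    have h3 := Submodule.add_mem _ (Submodule.add_mem _ hf h1) h2
    have : Finsupp.single a b + f -
        Finsupp.single (max a N) (s ^ (max a N - a) * b + s ^ (max a N - N) * c) =
        f - Finsupp.single N c +
          (Finsupp.single a b - Finsupp.single (max a N) (s ^ (max a N - a) * b)) +
          (Finsupp.single N c - Finsupp.single (max a N) (s ^ (max a N - N) * c)) := by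
      rw [Finsupp.single_add]
      abel
    rw [this]
    exact h3

lemma mem_range_of_pmap_eq_zero (f : ℕ →₀ R) (hf : pmap R s f = 0) :
    f ∈ LinearMap.range (dmap R s) := by
  obtain ⟨N, c, hmem⟩ := exists_single_sub_mem R s f
  obtain ⟨g, hg⟩ := hmem
  have hps : pmap R s (Finsupp.single N c) = 0 := by
    have h1 : pmap R s (f - Finsupp.single N c) = 0 := by
      rw [← hg, ← LinearMap.comp_apply, pmap_comp_dmap]; rfl
    rw [map_sub, hf, zero_sub, neg_eq_zero] at h1
    exact h1
  rw [pmap_single] at hps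
  have h0 : (Localization.mk c (⟨s ^ N, ⟨N, rfl⟩⟩ : Submonoid.powers s) : Localization.Away s) =
      Localization.mk 0 1 := by rw [hps, Localization.mk_zero]
  rw [Localization.mk_eq_mk_iff, Localization.r_iff_exists] at h0
  obtain ⟨t, ht⟩ := h0
  obtain ⟨m, hm⟩ := t.prop
  have hc : s ^ m * c = 0 := by
    have := ht
    simp only [OneMemClass.coe_one, one_mul, mul_zero] at this
    rw [← hm] at this
    simpa using this
  have h4 := single_sub_mem_range R s N m c
  rw [hc, Finsupp.single_zero, sub_zero] at h4
  have h5 : f = f - Finsupp.single N c + Finsupp.single N c := by abel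
  rw [h5, ← hg]
  exact Submodule.add_mem _ (LinearMap.mem_range_self _ _) h4

end ContramoduleAux
open CategoryTheory Opposite
namespace ContramoduleAux
variable (R : Type) [CommRing R] (s : R)

lemma torsion_of_subsingleton (M : Type) [AddCommGroup M] [Module R M]
    (hM : Subsingleton (TensorProduct R (Localization.Away s) M)) :
    ∀ m : M, ∃ n : ℕ, s ^ n • m = 0 := by
  have hb := (IsLocalizedModule.isBaseChange (Submonoid.powers s) (Localization.Away s)
    (LocalizedModule.mkLinearMap (Submonoid.powers s) M)).equiv
  haveI := hM
  have hsub : Subsingleton (LocalizedModule (Submonoid.powers s) M) :=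
    hb.symm.toEquiv.subsingleton
  rw [LocalizedModule.subsingleton_iff] at hsub
  intro m
  obtain ⟨r, ⟨n, rfl⟩, h⟩ := hsub m
  exact ⟨n, h⟩

variable {M C : Type} [AddCommGroup M] [Module R M] [AddCommGroup C] [Module R C]

lemma hom_subsingleton (htor : ∀ m : M, ∃ n : ℕ, s ^ n • m = 0) :
    Subsingleton (Localization.Away s →ₗ[R] (M →ₗ[R] C)) := by
  refine subsingleton_of_forall_eq 0 fun f => ?_
  have key : ∀ (r : R) (n : ℕ) (m : M),
      f (Localization.mk r (⟨s ^ n, ⟨n, rfl⟩⟩ : Submonoid.powers s)) m = 0 := by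
    intro r n m
    obtain ⟨k, hk⟩ := htor m
    have hx : (Localization.mk r (⟨s ^ n, ⟨n, rfl⟩⟩ : Submonoid.powers s)
          : Localization.Away s) =
        s ^ k • Localization.mk r (⟨s ^ (n + k), ⟨n + k, rfl⟩⟩ : Submonoid.powers s) := by
      rw [Localization.smul_mk]
      exact mk_eq R s (show s ^ (n + k) * r = s ^ n * (s ^ k • r) by
        rw [smul_eq_mul, pow_add]; ring)
    rw [hx, map_smul, LinearMap.smul_apply, ← map_smul, hk]
    exact map_zero _
  have : f = 0 := by
    ext x m
    induction x using Localization.induction_on with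
    | H y =>
      obtain ⟨r, u⟩ := y
      obtain ⟨n, hn⟩ := u.prop
      have : u = (⟨s ^ n, ⟨n, rfl⟩⟩ : Submonoid.powers s) := Subtype.ext hn.symm
      rw [this]
      simpa using key r n m
  exact this

/-- Solving the recurrence `a n - s • a (n+1) = b n` in `Hom(M, C)` when `M` is `s`-torsion. -/
lemma exists_solution (htor : ∀ m : M, ∃ n : ℕ, s ^ n • m = 0)
    (b : ℕ → (M →ₗ[R] C)) :
    ∃ a : ℕ → (M →ₗ[R] C), ∀ n, a n - s • a (n + 1) = b n := by
  classical
  -- partial sums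
  set S : ℕ → ℕ → M → C := fun n K m => ∑ k ∈ Finset.range K, b (n + k) (s ^ k • m) with hS
  have hkill : ∀ (m : M) (K j : ℕ), s ^ K • m = 0 → K ≤ j → s ^ j • m = 0 := by
    intro m K j hK hle
    obtain ⟨i, rfl⟩ := Nat.exists_eq_add_of_le hle
    rw [add_comm, pow_add, mul_smul, hK, smul_zero]
  have hstable : ∀ (n K K' : ℕ) (m : M), s ^ K • m = 0 → K ≤ K' → S n K' m = S n K m := by
    intro n K K' m hK hle
    induction K' with
    | zero => cases Nat.le_zero.mp hle; rfl
    | succ K' ih =>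
      rcases Nat.lt_or_ge K (K' + 1) with h | h
      · have h' : K ≤ K' := Nat.lt_succ_iff.mp h
        rw [hS]
        simp only
        rw [Finset.sum_range_succ, hkill m K K' hK h', map_zero, add_zero]
        exact ih h'
      · have : K = K' + 1 := le_antisymm hle h
        rw [this]
  have hstable' : ∀ (n K K' : ℕ) (m : M), s ^ K • m = 0 → s ^ K' • m = 0 →
      S n K m = S n K' m := by
    intro n K K' m hK hK'
    rcases le_total K K' with h | h
    · rw [hstable n K K' m hK h]
    · rw [hstable n K' K m hK' h]
  have hadd : ∀ (n T : ℕ) (m₁ m₂ : M), S n T (m₁ + m₂) = S n T m₁ + S n T m₂ := by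
    intro n T m₁ m₂
    simp only [hS, smul_add, map_add, Finset.sum_add_distrib]
  have hsmul : ∀ (n T : ℕ) (r : R) (m : M), S n T (r • m) = r • S n T m := by
    intro n T r m
    simp only [hS]
    rw [Finset.smul_sum]
    refine Finset.sum_congr rfl fun k _ => ?_
    rw [smul_comm, map_smul]
  set K : M → ℕ := fun m => (htor m).choose with hK
  have hKspec : ∀ m : M, s ^ K m • m = 0 := fun m => (htor m).choose_spec
  set a : ℕ → (M →ₗ[R] C) := fun n =>
    { toFun := fun m => S n (K m) m
      map_add' := by
        intro m₁ m₂
        have h1 : s ^ (max (K m₁) (K m₂)) • m₁ = 0 :=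
          hkill m₁ _ _ (hKspec m₁) (le_max_left _ _)
        have h2 : s ^ (max (K m₁) (K m₂)) • m₂ = 0 :=
          hkill m₂ _ _ (hKspec m₂) (le_max_right _ _)
        have h12 : s ^ (max (K m₁) (K m₂)) • (m₁ + m₂) = 0 := by
          rw [smul_add, h1, h2, add_zero]
        rw [hstable' n _ _ _ (hKspec (m₁ + m₂)) h12,
          hstable' n _ _ m₁ (hKspec m₁) h1, hstable' n _ _ m₂ (hKspec m₂) h2]
        exact hadd n _ m₁ m₂
      map_smul' := by
        intro r m
        have h1 : s ^ K m • (r • m) = 0 := by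
          rw [smul_comm, hKspec, smul_zero]
        rw [hstable' n _ _ _ (hKspec (r • m)) h1, hsmul]
        rfl  } with ha
  refine ⟨a, fun n => ?_⟩
  ext m
  have hsm : s ^ K m • (s • m) = 0 := by
    rw [smul_comm, hKspec, smul_zero]
  have shift : S (n + 1) (K m) (s • m) = S n (K m + 1) m - b n m := by
    rw [hS]
    simp only
    rw [Finset.sum_range_succ' (fun k => b (n + k) (s ^ k • m)) (K m)]
    simp only [pow_zero, one_smul, pow_succ]
    rw [eq_sub_iff_add_eq]
    congr 1
    refine Finset.sum_congr rfl fun k _ => ?_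
    have : n + 1 + k = n + (k + 1) := by ring
    rw [this, mul_smul]
  have e1 : a n m = S n (K m) m := rfl
  have e2 : a (n + 1) (s • m) = S (n + 1) (K (s • m)) (s • m) := rfl
  simp only [LinearMap.sub_apply, LinearMap.smul_apply]
  have e3 : s • (a (n + 1)) m = a (n + 1) (s • m) := ((a (n + 1)).map_smul s m).symm
  rw [e3, e1, e2, hstable' (n + 1) _ _ _ (hKspec (s • m)) hsm, shift,
    hstable n (K m) (K m + 1) m (hKspec m) (Nat.le_succ _)]
  abel

end ContramoduleAux
namespace ContramoduleAux
open CategoryTheory Opposite Limits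
variable (R : Type) [CommRing R] (s : R)

/-- The two-term telescope complex resolving `R[1/s]`. -/
noncomputable def cplx : ChainComplex (ModuleCat R) ℕ :=
  ChainComplex.of
    (fun n => match n with
      | 0 => ModuleCat.of R (ℕ →₀ R)
      | 1 => ModuleCat.of R (ℕ →₀ R)
      | _ + 2 => ModuleCat.of R PUnit)
    (fun n => match n with
      | 0 => ModuleCat.ofHom (dmap R s)
      | _ + 1 => 0)
    (fun n => match n with
      | 0 => Limits.zero_comp
      | _ + 1 => Limits.zero_comp)

lemma cplx_d_1_0 : (cplx R s).d 1 0 = ModuleCat.ofHom (dmap R s) := by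
  unfold cplx; simp [ChainComplex.of.d]

lemma cplx_d_succ (n : ℕ) : (cplx R s).d (n + 2) (n + 1) = 0 := by
  unfold cplx; simp [ChainComplex.of.d]

instance cplx_projective (n : ℕ) : Projective ((cplx R s).X n) := by
  match n with
  | 0 => exact (IsProjective.iff_projective _).mp inferInstance
  | 1 => exact (IsProjective.iff_projective _).mp inferInstance
  | n + 2 => exact (IsProjective.iff_projective _).mp inferInstance

lemma cplx_exactAt_succ (n : ℕ) : (cplx R s).ExactAt (n + 1) := by
  rw [HomologicalComplex.exactAt_iff' _ (n + 2) (n + 1) n (by simp) (by simp)]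
  match n with
  | 0 =>
    rw [ShortComplex.moduleCat_exact_iff]
    intro x hx
    dsimp at hx
    change ((cplx R s).d 1 0).hom x = 0 at hx
    rw [cplx_d_1_0] at hx
    have hz := dmap_injective R s (by rw [map_zero]; exact hx : dmap R s x = dmap R s 0)
    exact ⟨0, by change ((cplx R s).d (0 + 2) (0 + 1)).hom 0 = x; rw [cplx_d_succ]; exact (hz.symm.trans rfl).symm ▸ rfl⟩
  | n + 1 =>
    apply ShortComplex.exact_of_isZero_X₂
    haveI : Subsingleton (((cplx R s).sc' (n + 1 + 2) (n + 1 + 1) (n + 1)).X₂ : Type) :=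
      (inferInstance : Subsingleton PUnit)
    exact ModuleCat.isZero_of_subsingleton _

/-- The augmentation map to the single complex. -/
noncomputable def piRes : cplx R s ⟶
    (ChainComplex.single₀ (ModuleCat R)).obj (ModuleCat.of R (Localization.Away s)) :=
  (ChainComplex.toSingle₀Equiv _ _).symm
    ⟨ModuleCat.ofHom (pmap R s), by rw [cplx_d_1_0]; exact ModuleCat.hom_ext (pmap_comp_dmap R s)⟩

lemma piRes_f_zero : (piRes R s).f 0 = ModuleCat.ofHom (pmap R s) :=
  ChainComplex.toSingle₀Equiv_symm_apply_f_zero _ _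

/-- The projective resolution of the localization given by the telescope complex. -/
noncomputable def resol : ProjectiveResolution (ModuleCat.of R (Localization.Away s)) where
  complex := cplx R s
  π := piRes R s
  quasiIso := ⟨fun n => by
    cases n with
    | zero =>
      rw [ChainComplex.quasiIsoAt₀_iff, ShortComplex.quasiIso_iff_of_zeros']
      · constructor
        · rw [ShortComplex.moduleCat_exact_iff]
          intro x hx
          dsimp at hx
          change ((piRes R s).f 0).hom x = 0 at hx
          rw [piRes_f_zero] at hx
          obtain ⟨y, hy⟩ := mem_range_of_pmap_eq_zero R s x hx
          exact ⟨y, by change ((cplx R s).d 1 0).hom y = x; rw [cplx_d_1_0]; exact hy⟩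
        · rw [ModuleCat.epi_iff_surjective]
          intro x
          obtain ⟨y, hy⟩ := pmap_surjective R s x
          exact ⟨y, by change ((piRes R s).f 0).hom y = x; rw [piRes_f_zero]; exact hy⟩
      all_goals rfl
    | succ n =>
      rw [quasiIsoAt_iff_exactAt']
      · exact cplx_exactAt_succ R s n
      · apply ChainComplex.exactAt_succ_single_obj⟩

end ContramoduleAux
namespace ContramoduleAux
open CategoryTheory Opposite Limits
variable (R : Type) [CommRing R] (s : R)

lemma ext_subsingleton (N : Type) [AddCommGroup N] [Module R N]
    (hsolve : ∀ b : ℕ → N, ∃ a : ℕ → N, ∀ n, a n - s • a (n + 1) = b n) :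
    Subsingleton (((Ext R (ModuleCat R) 1).obj
      (op (ModuleCat.of R (Localization.Away s)))).obj (ModuleCat.of R N)) := by
  set Y : ModuleCat R := ModuleCat.of R N with hY
  have h1 : (((cplx R s).linearYonedaObj R Y)).ExactAt 1 := by
    rw [HomologicalComplex.exactAt_iff' _ 0 1 2 (by simp) (by simp)]
    rw [ShortComplex.moduleCat_exact_iff]
    intro g hg
    -- `g` is a linear map `(ℕ →₀ R) →ₗ[R] N` (as a morphism `(cplx R s).X 1 ⟶ Y`)
    let g' : (ℕ →₀ R) →ₗ[R] N := (g : (cplx R s).X 1 ⟶ Y).hom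
    obtain ⟨a, ha⟩ := hsolve (fun n => g' (Finsupp.single n 1))
    refine ⟨ModuleCat.ofHom (Finsupp.lsum R fun n => LinearMap.toSpanSingleton R N (a n)), ?_⟩
    change (cplx R s).d 1 0 ≫ ModuleCat.ofHom _ = g
    rw [cplx_d_1_0]
    apply ModuleCat.hom_ext
    refine Finsupp.lhom_ext' fun n => LinearMap.ext_ring ?_
    show (Finsupp.lsum R fun n => LinearMap.toSpanSingleton R N (a n))
        (dmap R s (Finsupp.single n 1)) = g' (Finsupp.single n 1)
    rw [dmap_single, map_sub]
    simp only [Finsupp.lsum_single, LinearMap.toSpanSingleton_apply, mul_one, one_smul]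
    rw [← ha n]
  have h0 : IsZero (((cplx R s).linearYonedaObj R Y).homology 1) :=
    (HomologicalComplex.exactAt_iff_isZero_homology _ _).mp h1
  have h2 : IsZero (((Ext R (ModuleCat R) 1).obj
      (op (ModuleCat.of R (Localization.Away s)))).obj Y) :=
    h0.of_iso ((resol R s).isoExt 1 Y)
  set E : ModuleCat R := ((Ext R (ModuleCat R) 1).obj
      (op (ModuleCat.of R (Localization.Away s)))).obj Y with hE
  refine subsingleton_of_forall_eq 0 fun x => ?_
  have hid : (𝟙 E : E ⟶ E) = 0 := h2.eq_of_src _ _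
  calc x = (𝟙 E : E ⟶ E) x := (ModuleCat.id_apply _ x).symm
  _ = (0 : E ⟶ E) x := by rw [hid]
  _ = 0 := LinearMap.zero_apply x

end ContramoduleAux

open CategoryTheory Opposite

/-- Let `R` be a commutative ring, `s ∈ R`, `M` an `s`-torsion `R`-module
(`R[s⁻¹] ⊗_R M = 0`) and `C` any `R`-module. Then `Hom_R(M, C)` is an `s`-contramodule:
`Hom_R(R[s⁻¹], Hom_R(M,C)) = 0 = Ext¹_R(R[s⁻¹], Hom_R(M,C))`. -/
theorem hom_from_torsion_isContramodule
    (R : Type) [CommRing R] (s : R) (M C : Type) [AddCommGroup M] [Module R M]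
    [AddCommGroup C] [Module R C]
    (hM : Subsingleton (TensorProduct R (Localization.Away s) M)) :
    Subsingleton (Localization.Away s →ₗ[R] (M →ₗ[R] C)) ∧
      Subsingleton (((Ext R (ModuleCat R) 1).obj
        (op (ModuleCat.of R (Localization.Away s)))).obj
        (ModuleCat.of R (M →ₗ[R] C))) := by
  have htor := ContramoduleAux.torsion_of_subsingleton R s M hM
  refine ⟨ContramoduleAux.hom_subsingleton R s htor, ?_⟩
  exact ContramoduleAux.ext_subsingleton R s (M →ₗ[R] C)
    (ContramoduleAux.exists_solution R s htor)
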